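/- Let G be a finitely generated abelian group, A a commutative ring, and B = A[T₁, …, T_r] a polynomial ring endowed with a G-grading in which A ⊆ B₀ and each variable T_j is homogeneous. Let I ⊆ B be a monomial ideal (an ideal generated by monomials in T₁, …, T_r). Then B/I admits a Stanley decomposition: there exist finitely many homogeneous elements u₁, …, u_m ∈ B/I and subsets Z₁, …, Z_m (possibly empty) of {T₁, …, T_r} such that, as A-modules, B/I = ⊕_{i=1}^m u_i A[Z_i], where u_i A[Z_i] denotes the A-submodule of B/I spanned by the elements u_i·w with w a monomial in the variables of Z_i. -/

import Mathlib

open Finsupp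

section Aux

theorem stanley_comb {r : ℕ} (V : Finset (Fin r)) :
    ∀ (F : Finset (Fin r →₀ ℕ)), (∀ β ∈ F, β.support ⊆ V) →
    ∃ (ι : Type) (_ : Fintype ι) (δ : ι → (Fin r →₀ ℕ)) (Z : ι → Finset (Fin r)),
      (∀ p, (δ p).support ⊆ V) ∧ (∀ p, Z p ⊆ V) ∧
      (∀ α : Fin r →₀ ℕ, α.support ⊆ V →
        ((∃ p β, β.support ⊆ Z p ∧ α = δ p + β) ↔ ¬ ∃ γ ∈ F, γ ≤ α)) ∧
      (∀ p q βp βq, βp.support ⊆ Z p → βq.support ⊆ Z q →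
        δ p + βp = δ q + βq → p = q) := by
  classical
  induction V using Finset.induction_on with
  | empty =>
    intro F hF
    rcases F.eq_empty_or_nonempty with rfl | ⟨β₀, hβ₀⟩
    · refine ⟨PUnit, inferInstance, fun _ => 0, fun _ => ∅, by simp, by simp, ?_, ?_⟩
      · intro α hα
        have hα0 : α = 0 := support_eq_empty.1 (Finset.subset_empty.1 hα)
        constructor
        · rintro - ⟨γ, hγ, -⟩; exact absurd hγ (Finset.notMem_empty γ)
        · rintro -
          exact ⟨PUnit.unit, 0, by simp, by simp [hα0]⟩
      · intro p q _ _ _ _ _; rfl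
    · have hβ₀0 : β₀ = 0 := support_eq_empty.1 (Finset.subset_empty.1 (hF β₀ hβ₀))
      refine ⟨PEmpty, inferInstance, fun p => p.elim, fun p => p.elim, fun p => p.elim,
        fun p => p.elim, ?_, fun p => p.elim⟩
      intro α hα
      constructor
      · rintro ⟨p, -⟩; exact p.elim
      · intro h; exact absurd ⟨β₀, hβ₀, hβ₀0 ▸ (zero_le : (0 : Fin r →₀ ℕ) ≤ α)⟩ h
  | @insert j V' hj ih =>
    intro F hF
    set N : ℕ := F.sup fun β => β j with hN
    set Fk : ℕ → Finset (Fin r →₀ ℕ) :=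
      fun k => (F.filter fun β => β j ≤ k).image fun β => β.erase j with hFkdef
    have hFk : ∀ k, ∀ γ ∈ Fk k, γ.support ⊆ V' := by
      intro k γ hγ
      simp only [hFkdef, Finset.mem_image, Finset.mem_filter] at hγ
      obtain ⟨β, ⟨hβF, -⟩, rfl⟩ := hγ
      intro x hx
      rw [support_erase, Finset.mem_erase] at hx
      rcases Finset.mem_insert.1 (hF β hβF hx.2) with h | h
      · exact absurd h hx.1
      · exact h
    have H : ∀ k : Fin (N + 1), ∃ (ι : Type) (_ : Fintype ι) (δ : ι → (Fin r →₀ ℕ))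
        (Z : ι → Finset (Fin r)),
        (∀ p, (δ p).support ⊆ V') ∧ (∀ p, Z p ⊆ V') ∧
        (∀ α : Fin r →₀ ℕ, α.support ⊆ V' →
          ((∃ p β, β.support ⊆ Z p ∧ α = δ p + β) ↔ ¬ ∃ γ ∈ Fk k, γ ≤ α)) ∧
        (∀ p q βp βq, βp.support ⊆ Z p → βq.support ⊆ Z q →
          δ p + βp = δ q + βq → p = q) := fun k => ih (Fk k) (hFk k)
    choose ι inst δ Z h1 h2 h3 h4 using H
    letI : ∀ k, Fintype (ι k) := inst
    -- auxiliary facts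
    have hjV' : ∀ {f : Fin r →₀ ℕ}, f.support ⊆ V' → f j = 0 := by
      intro f hf
      by_contra h
      exact hj (hf (mem_support_iff.2 h))
    have hδj : ∀ k p, δ k p j = 0 := fun k p => hjV' (h1 k p)
    -- Claim A
    have claimA : ∀ α : Fin r →₀ ℕ,
        ((∃ γ ∈ F, γ ≤ α) ↔ ∃ γ' ∈ Fk (min (α j) N), γ' ≤ α.erase j) := by
      intro α
      constructor
      · rintro ⟨γ, hγF, hγle⟩
        refine ⟨γ.erase j, ?_, ?_⟩
        · simp only [hFkdef, Finset.mem_image, Finset.mem_filter]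
          exact ⟨γ, ⟨hγF, le_min (hγle j) (Finset.le_sup (f := fun β => β j) hγF)⟩, rfl⟩
        · intro i
          rcases eq_or_ne i j with rfl | hij
          · simp [erase_same, hδj]
          · rw [erase_ne hij, erase_ne hij]; exact hγle i
      · rintro ⟨γ', hγ'mem, hγ'le⟩
        simp only [hFkdef, Finset.mem_image, Finset.mem_filter] at hγ'mem
        obtain ⟨γ, ⟨hγF, hγj⟩, rfl⟩ := hγ'mem
        refine ⟨γ, hγF, fun i => ?_⟩
        rcases eq_or_ne i j with rfl | hij
        · exact le_trans hγj (min_le_left _ _)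
        · have := hγ'le i
          rwa [erase_ne hij, erase_ne hij] at this
    refine ⟨Σ k : Fin (N + 1), ι k, inferInstance,
      fun i => single j (i.1 : ℕ) + δ i.1 i.2,
      fun i => if (i.1 : ℕ) = N then insert j (Z i.1 i.2) else Z i.1 i.2,
      ?_, ?_, ?_, ?_⟩
    · rintro ⟨k, p⟩
      refine (support_add).trans ?_
      apply Finset.union_subset
      · exact (support_single_subset).trans (by simp)
      · exact (h1 k p).trans (Finset.subset_insert _ _)
    · rintro ⟨k, p⟩
      dsimp only
      split_ifs
      · exact Finset.insert_subset_insert _ (h2 k p)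
      · exact (h2 k p).trans (Finset.subset_insert _ _)
    · -- coverage
      intro α hαsupp
      constructor
      · rintro ⟨⟨k, p⟩, β, hβZ, rfl⟩
        dsimp only at hβZ
        by_cases hk : (k : ℕ) = N
        · rw [if_pos hk] at hβZ
          have hβerase : (β.erase j).support ⊆ Z k p := by
            intro x hx
            rw [support_erase, Finset.mem_erase] at hx
            rcases Finset.mem_insert.1 (hβZ hx.2) with h | h
            · exact absurd h hx.1
            · exact h
          have hαj : (single j (k : ℕ) + δ k p + β) j = (k : ℕ) + β j := by
            simp [hδj k p]
          have hmin : min ((single j (k : ℕ) + δ k p + β) j) N = N := by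
            rw [hαj, hk]; omega
          have herase : (single j (k : ℕ) + δ k p + β).erase j = δ k p + β.erase j := by
            ext i
            rcases eq_or_ne i j with rfl | hij
            · simp [erase_same, hδj k p]
            · simp [erase_ne hij, single_eq_of_ne (Ne.symm hij)]
          intro hex
          have := (claimA _).1 hex
          rw [hmin, herase] at this
          have hsupp : (δ k p + β.erase j).support ⊆ V' :=
            (support_add).trans (Finset.union_subset (h1 k p) (hβerase.trans (h2 k p)))
          have := (h3 k _ hsupp).1 ⟨p, β.erase j, hβerase, rfl⟩
          rw [hk] at this
          exact this ‹_›
        · rw [if_neg hk] at hβZ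
          have hβj : β j = 0 := hjV' (hβZ.trans (h2 k p))
          have hαj : (single j (k : ℕ) + δ k p + β) j = (k : ℕ) := by
            simp [hδj k p, hβj]
          have hkN : (k : ℕ) ≤ N := Nat.lt_succ_iff.1 k.isLt
          have hmin : min ((single j (k : ℕ) + δ k p + β) j) N = (k : ℕ) := by
            rw [hαj]; omega
          have herase : (single j (k : ℕ) + δ k p + β).erase j = δ k p + β := by
            ext i
            rcases eq_or_ne i j with rfl | hij
            · simp [erase_same, hδj k p, hβj]
            · simp [erase_ne hij, single_eq_of_ne (Ne.symm hij)]
          intro hex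
          have := (claimA _).1 hex
          rw [hmin, herase] at this
          have hsupp : (δ k p + β).support ⊆ V' :=
            (support_add).trans (Finset.union_subset (h1 k p) (hβZ.trans (h2 k p)))
          exact (h3 k _ hsupp).1 ⟨p, β, hβZ, rfl⟩ this
      · intro hno
        have hk0N : min (α j) N < N + 1 := by omega
        set k0 : Fin (N + 1) := ⟨min (α j) N, hk0N⟩ with hk0
        have hnoFk : ¬ ∃ γ' ∈ Fk (k0 : ℕ), γ' ≤ α.erase j := by
          intro h; exact hno ((claimA α).2 h)
        have heasupp : (α.erase j).support ⊆ V' := by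
          intro x hx
          rw [support_erase, Finset.mem_erase] at hx
          rcases Finset.mem_insert.1 (hαsupp hx.2) with h | h
          · exact absurd h hx.1
          · exact h
        obtain ⟨p, β', hβ'Z, heq⟩ := (h3 k0 _ heasupp).2 hnoFk
        have hβ'j : β' j = 0 := hjV' (hβ'Z.trans (h2 k0 p))
        by_cases hαjN : α j < N
        · have hk0v : (k0 : ℕ) = α j := by simp [hk0]; omega
          refine ⟨⟨k0, p⟩, β', ?_, ?_⟩
          · dsimp only
            rw [if_neg (by omega)]
            exact hβ'Z
          · ext i
            rcases eq_or_ne i j with rfl | hij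
            · simp [hδj k0 p, hβ'j]; omega
            · have := congrArg (fun f => f i) heq
              simp only [erase_ne hij, coe_add, Pi.add_apply] at this ⊢
              rw [single_eq_of_ne hij, this]
              ring
        · have hNle : N ≤ α j := by omega
          have hk0v : (k0 : ℕ) = N := by simp [hk0]; omega
          refine ⟨⟨k0, p⟩, β' + single j (α j - N), ?_, ?_⟩
          · dsimp only
            rw [if_pos hk0v]
            refine (support_add).trans (Finset.union_subset ?_ ?_)
            · exact hβ'Z.trans (Finset.subset_insert _ _)
            · exact (support_single_subset).trans (by simp)
          · ext i
            rcases eq_or_ne i j with rfl | hij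
            · simp only [coe_add, Pi.add_apply, single_eq_same, hδj k0 p, hβ'j, hk0v]
              omega
            · have := congrArg (fun f => f i) heq
              simp only [erase_ne hij, coe_add, Pi.add_apply] at this ⊢
              rw [single_eq_of_ne hij, single_eq_of_ne hij, this]
              ring
    · -- disjointness
      rintro ⟨k, p⟩ ⟨k', p'⟩ βp βq hβp hβq heq
      dsimp only at hβp hβq heq
      -- value at j
      have hvj : (k : ℕ) + βp j = (k' : ℕ) + βq j := by
        have := congrArg (fun f => f j) heq
        simpa [hδj] using this
      have hβpj : ¬ (k : ℕ) = N → βp j = 0 := by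
        intro h
        rw [if_neg h] at hβp
        exact hjV' (hβp.trans (h2 k p))
      have hβqj : ¬ (k' : ℕ) = N → βq j = 0 := by
        intro h
        rw [if_neg h] at hβq
        exact hjV' (hβq.trans (h2 k' p'))
      have hkk' : (k : ℕ) = (k' : ℕ) := by
        by_cases h1' : (k : ℕ) = N <;> by_cases h2' : (k' : ℕ) = N
        · omega
        · have := hβqj h2'
          have hk'N : (k' : ℕ) ≤ N := Nat.lt_succ_iff.1 k'.isLt
          omega
        · have := hβpj h1'
          have hkN : (k : ℕ) ≤ N := Nat.lt_succ_iff.1 k.isLt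
          omega
        · omega
      have hkeq : k = k' := Fin.ext hkk'
      subst hkeq
      -- erase j of both sides
      have herase : δ k p + βp.erase j = δ k p' + βq.erase j := by
        ext i
        rcases eq_or_ne i j with rfl | hij
        · simp [erase_same, hδj]
        · have := congrArg (fun f => f i) heq
          simp only [coe_add, Pi.add_apply, single_eq_of_ne (Ne.symm hij)] at this
          simp only [coe_add, Pi.add_apply, erase_ne hij]
          omega
      have hsupp_erase : ∀ (β : Fin r →₀ ℕ) (q : ι k), β.support ⊆
          (if (k : ℕ) = N then insert j (Z k q) else Z k q) →
          (β.erase j).support ⊆ Z k q := by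
        intro β q hβ
        intro x hx
        rw [support_erase, Finset.mem_erase] at hx
        by_cases h : (k : ℕ) = N
        · rw [if_pos h] at hβ
          rcases Finset.mem_insert.1 (hβ hx.2) with h' | h'
          · exact absurd h' hx.1
          · exact h'
        · rw [if_neg h] at hβ
          exact hβ hx.2
      have := h4 k p p' (βp.erase j) (βq.erase j)
        (hsupp_erase βp p hβp) (hsupp_erase βq p' hβq) herase
      subst this
      rfl


/-- Dickson-type lemma: every set of exponent vectors has a finite subset with the same
upward closure. -/
theorem stanley_finite_gen {r : ℕ} (s : Set (Fin r →₀ ℕ)) :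
    ∃ F : Finset (Fin r →₀ ℕ), (↑F ⊆ s) ∧
      ∀ α, (∃ β ∈ s, β ≤ α) ↔ ∃ β ∈ F, β ≤ α := by
  classical
  set M : Set (Fin r →₀ ℕ) := {β | β ∈ s ∧ ∀ γ ∈ s, γ ≤ β → γ = β} with hM
  -- every element of s dominates a minimal element
  have hmin : ∀ α ∈ s, ∃ β ∈ M, β ≤ α := by
    have key : ∀ n : ℕ, ∀ α, α ∈ s → (∑ i, α i) = n → ∃ β ∈ M, β ≤ α := by
      intro n
      induction n using Nat.strong_induction_on with
      | _ n ih =>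
        intro α hα hdeg
        by_cases hmem : α ∈ M
        · exact ⟨α, hmem, le_refl α⟩
        · simp only [hM, Set.mem_setOf_eq, not_and, not_forall] at hmem
          obtain ⟨γ, hγs, hγle, hγne⟩ := hmem hα
          have hlt : (∑ i, γ i) < ∑ i, α i := by
            obtain ⟨i₀, hi₀⟩ : ∃ i, γ i ≠ α i := by
              by_contra h
              push_neg at h
              exact hγne (Finsupp.ext h)
            refine Finset.sum_lt_sum (fun i _ => hγle i) ⟨i₀, Finset.mem_univ _, ?_⟩
            exact lt_of_le_of_ne (hγle i₀) hi₀
          obtain ⟨β, hβM, hβle⟩ := ih (∑ i, γ i) (hdeg ▸ hlt) γ hγs rfl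
          exact ⟨β, hβM, hβle.trans hγle⟩
    exact fun α hα => key (∑ i, α i) α hα rfl
  -- M is a finite antichain
  have hanti : IsAntichain (· ≤ ·) M := by
    intro a ha b hb hne hle
    exact hne (ha.2 b hb.1 (hb.2 a ha.1 hle ▸ le_refl _) ▸ (hb.2 a ha.1 hle).symm ▸ rfl)
  have hPWO : M.PartiallyWellOrderedOn (· ≤ ·) := Set.isPWO_of_wellQuasiOrderedLE M
  have hfin : M.Finite := hanti.finite_of_partiallyWellOrderedOn hPWO
  refine ⟨hfin.toFinset, fun β hβ => (hfin.mem_toFinset.1 (Finset.mem_coe.1 hβ)).1, fun α => ?_⟩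
  constructor
  · rintro ⟨β, hβs, hβle⟩
    obtain ⟨γ, hγM, hγle⟩ := hmin β hβs
    exact ⟨γ, hfin.mem_toFinset.2 hγM, hγle.trans hβle⟩
  · rintro ⟨β, hβF, hβle⟩
    exact ⟨β, (hfin.mem_toFinset.1 hβF).1, hβle⟩

end Aux

open MvPolynomial in
/-- **Lemma (existence of Stanley decompositions of monomial quotients).**
Let `B = A[T₁,…,T_r]` be `G`-graded with each `T_j` homogeneous of degree `dT j`, and let
`I ⊆ B` be a monomial ideal.  Then `B/I` admits a Stanley decomposition: there are
finitely many homogeneous elements `u₁,…,u_m ∈ B/I` and subsets `Z₁,…,Z_m` of the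
variables such that, as `A`-modules, `B/I = ⊕_p u_p·A[Z_p]`, where `u_p·A[Z_p]` is the
`A`-span of the products of `u_p` with the monomials in the variables of `Z_p`. -/
theorem exists_stanley_decomposition_of_monomial_ideal
    {G : Type*} [AddCommGroup G] [AddGroup.FG G]
    {A : Type*} [CommRing A] {r : ℕ} (dT : Fin r → G)
    (I : Ideal (MvPolynomial (Fin r) A))
    (hI : ∃ s : Set (Fin r →₀ ℕ),
      I = Ideal.span ((fun α => MvPolynomial.monomial α (1 : A)) '' s)) :
    ∃ (m : ℕ) (u : Fin m → (MvPolynomial (Fin r) A ⧸ I)) (Z : Fin m → Finset (Fin r)),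
      (∀ p, ∃ γ : G, u p ∈ Submodule.map (Ideal.Quotient.mkₐ A I).toLinearMap
        (MvPolynomial.weightedHomogeneousSubmodule A dT γ)) ∧
      (⨆ p, Submodule.span A
        ((fun α => u p * Ideal.Quotient.mk I (MvPolynomial.monomial α (1 : A))) ''
          {α : Fin r →₀ ℕ | (α.support : Set (Fin r)) ⊆ (Z p : Set (Fin r))})) = ⊤ ∧
      iSupIndep (fun p => Submodule.span A
        ((fun α => u p * Ideal.Quotient.mk I (MvPolynomial.monomial α (1 : A))) ''
          {α : Fin r →₀ ℕ | (α.support : Set (Fin r)) ⊆ (Z p : Set (Fin r))})) := by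
  classical
  obtain ⟨s, rfl⟩ := hI
  set I' : Ideal (MvPolynomial (Fin r) A) :=
    Ideal.span ((fun α => MvPolynomial.monomial α (1 : A)) '' s) with hI'def
  set S : Set (Fin r →₀ ℕ) := {α | ∃ β ∈ s, β ≤ α} with hSdef
  have hSup : ∀ {a b : Fin r →₀ ℕ}, a ∈ S → a ≤ b → b ∈ S := by
    rintro a b ⟨β, hβ, hle⟩ hab
    exact ⟨β, hβ, hle.trans hab⟩
  -- the ideal of polynomials supported on S
  set J : Ideal (MvPolynomial (Fin r) A) :=
    { carrier := {p | ∀ α ∈ p.support, α ∈ S}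
      add_mem' := by
        intro p q hp hq α hα
        rcases Finset.mem_union.1 (MvPolynomial.support_add hα) with h | h
        · exact hp α h
        · exact hq α h
      zero_mem' := by intro α hα; simp at hα
      smul_mem' := by
        intro c x hx α hα
        rw [smul_eq_mul] at hα
        obtain ⟨y, hy, z, hz, hyz⟩ := Finset.mem_add.1 (MvPolynomial.support_mul c x hα)
        exact hSup (hx z hz) (hyz ▸ le_add_self) } with hJdef
  have hJI : I' = J := by
    apply le_antisymm
    · rw [hI'def, Ideal.span_le]
      rintro x ⟨β, hβ, rfl⟩
      intro α hα
      have h := MvPolynomial.support_monomial_subset hα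
      rw [Finset.mem_singleton] at h
      rw [h]
      exact ⟨β, hβ, le_refl β⟩
    · intro p hp
      rw [← MvPolynomial.support_sum_monomial_coeff p]
      refine Ideal.sum_mem _ ?_
      intro α hα
      obtain ⟨β, hβs, hβle⟩ := hp α hα
      have h : monomial α (MvPolynomial.coeff α p)
          = monomial (α - β) (MvPolynomial.coeff α p) * monomial β 1 := by
        rw [MvPolynomial.monomial_mul, mul_one, tsub_add_cancel_of_le hβle]
      rw [h]
      exact Ideal.mul_mem_left _ _ (Ideal.subset_span ⟨β, hβs, rfl⟩)
  have hmk0 : ∀ {α : Fin r →₀ ℕ}, α ∈ S →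
      Ideal.Quotient.mk I' (monomial α (1 : A)) = 0 := by
    intro α hα
    rw [Ideal.Quotient.eq_zero_iff_mem, hJI]
    intro γ hγ
    have h := MvPolynomial.support_monomial_subset hγ
    rw [Finset.mem_singleton] at h
    rw [h]
    exact hα
  have hscal : ∀ (α : Fin r →₀ ℕ) (c : A),
      Ideal.Quotient.mk I' (monomial α c) = c • Ideal.Quotient.mk I' (monomial α 1) := by
    intro α c
    have h1 : monomial α c = c • monomial α (1 : A) := by
      rw [MvPolynomial.smul_monomial, smul_eq_mul, mul_one]
    rw [h1, ← Ideal.Quotient.mkₐ_eq_mk (R₁ := A)]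
    exact map_smul _ c _
  have hmul : ∀ (d β : Fin r →₀ ℕ),
      Ideal.Quotient.mk I' (monomial d (1 : A)) * Ideal.Quotient.mk I' (monomial β 1)
        = Ideal.Quotient.mk I' (monomial (d + β) 1) := by
    intro d β
    rw [← map_mul, MvPolynomial.monomial_mul, one_mul]
  -- the basis of the quotient given by standard monomials
  set v : {α : Fin r →₀ ℕ // α ∉ S} → (MvPolynomial (Fin r) A ⧸ I') :=
    fun x => Ideal.Quotient.mk I' (monomial x.1 1) with hv
  have hli : LinearIndependent A v := by
    rw [linearIndependent_iff]
    intro l hl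
    set q : MvPolynomial (Fin r) A := l.sum fun x c => monomial x.1 c with hq
    have hmkq : Ideal.Quotient.mk I' q = 0 := by
      rw [← hl, Finsupp.linearCombination_apply, hq, Finsupp.sum, Finsupp.sum, map_sum]
      refine Finset.sum_congr rfl fun x _ => ?_
      rw [hscal x.1 (l x)]
    have hqJ : ∀ γ ∈ q.support, γ ∈ S := by
      have := Ideal.Quotient.eq_zero_iff_mem.1 hmkq
      rw [hJI] at this
      exact this
    ext x₀
    by_contra h
    have hcoeff : MvPolynomial.coeff x₀.1 q = l x₀ := by
      rw [hq, Finsupp.sum, MvPolynomial.coeff_sum]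
      rw [Finset.sum_eq_single x₀]
      · rw [MvPolynomial.coeff_monomial, if_pos rfl]
      · intro x _ hne
        rw [MvPolynomial.coeff_monomial, if_neg (fun hc => hne (Subtype.ext hc))]
      · intro hx
        rw [MvPolynomial.coeff_monomial, if_pos rfl]
        exact Finsupp.notMem_support_iff.1 hx
    have hmem : x₀.1 ∈ q.support := MvPolynomial.mem_support_iff.2 (by rw [hcoeff]; exact h)
    exact x₀.2 (hqJ _ hmem)
  have hsp : ⊤ ≤ Submodule.span A (Set.range v) := by
    rintro x -
    obtain ⟨p, rfl⟩ := Ideal.Quotient.mk_surjective x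
    rw [← MvPolynomial.support_sum_monomial_coeff p, map_sum]
    refine Submodule.sum_mem _ ?_
    intro α _
    rw [hscal α (MvPolynomial.coeff α p)]
    refine Submodule.smul_mem _ _ ?_
    by_cases hαS : α ∈ S
    · rw [hmk0 hαS]
      exact Submodule.zero_mem _
    · exact Submodule.subset_span ⟨⟨α, hαS⟩, rfl⟩
  -- the combinatorial Stanley decomposition
  obtain ⟨F, hFs, hFgen⟩ := stanley_finite_gen s
  obtain ⟨ι, instι, δ, Z', hδV, hZV, hcov, hdisj⟩ :=
    stanley_comb Finset.univ F (fun β _ => Finset.subset_univ _)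
  have hcov' : ∀ α : Fin r →₀ ℕ,
      (∃ p β, β.support ⊆ Z' p ∧ α = δ p + β) ↔ α ∉ S := by
    intro α
    rw [hcov α (Finset.subset_univ _)]
    constructor
    · intro h hS
      exact h ((hFgen α).1 hS)
    · intro h h'
      exact h ((hFgen α).2 h')
  letI : Fintype ι := instι
  set e := Fintype.equivFin ι with he
  -- description of the summand generating sets
  set T : ι → Set {α : Fin r →₀ ℕ // α ∉ S} :=
    fun q => {x | ∃ β, β.support ⊆ Z' q ∧ (x : Fin r →₀ ℕ) = δ q + β} with hT
  have himg : ∀ q : ι,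
      ((fun α => Ideal.Quotient.mk I' (monomial (δ q) (1 : A)) *
          Ideal.Quotient.mk I' (monomial α (1 : A))) ''
        {α : Fin r →₀ ℕ | (α.support : Set (Fin r)) ⊆ (Z' q : Set (Fin r))})
      = v '' T q := by
    intro q
    ext y
    constructor
    · rintro ⟨β, hβ, rfl⟩
      have hβ' : β.support ⊆ Z' q := by
        intro i hi
        exact_mod_cast hβ (Finset.mem_coe.2 hi)
      have hnot : (δ q + β) ∉ S := (hcov' _).1 ⟨q, β, hβ', rfl⟩
      exact ⟨⟨δ q + β, hnot⟩, ⟨β, hβ', rfl⟩, (hmul _ _).symm⟩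
    · rintro ⟨x, ⟨β, hβ, hx⟩, rfl⟩
      refine ⟨β, Finset.coe_subset.2 hβ, ?_⟩
      show Ideal.Quotient.mk I' (monomial (δ q) 1) * Ideal.Quotient.mk I' (monomial β 1)
        = Ideal.Quotient.mk I' (monomial x.1 1)
      rw [hmul, hx]
  refine ⟨Fintype.card ι,
    fun p => Ideal.Quotient.mk I' (monomial (δ (e.symm p)) 1),
    fun p => Z' (e.symm p), ?_, ?_, ?_⟩
  · intro p
    refine ⟨Finsupp.weight dT (δ (e.symm p)),
      Submodule.mem_map.2 ⟨monomial (δ (e.symm p)) 1, ?_, ?_⟩⟩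
    · rw [MvPolynomial.mem_weightedHomogeneousSubmodule]
      exact MvPolynomial.isWeightedHomogeneous_monomial _ _ _ rfl
    · simp [Ideal.Quotient.mkₐ_eq_mk]
  · rw [eq_top_iff]
    rintro x -
    obtain ⟨p, rfl⟩ := Ideal.Quotient.mk_surjective x
    rw [← MvPolynomial.support_sum_monomial_coeff p, map_sum]
    refine Submodule.sum_mem _ ?_
    intro α _
    rw [hscal α (MvPolynomial.coeff α p)]
    refine Submodule.smul_mem _ _ ?_
    by_cases hαS : α ∈ S
    · rw [hmk0 hαS]
      exact Submodule.zero_mem _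
    · obtain ⟨q, β, hβZ, rfl⟩ := (hcov' α).2 hαS
      refine Submodule.mem_iSup_of_mem (e q) (Submodule.subset_span ?_)
      simp only [Equiv.symm_apply_apply]
      exact ⟨β, Finset.coe_subset.2 hβZ, hmul _ _⟩
  · intro p
    rw [Submodule.disjoint_def]
    intro x hx1 hx2
    set b : Module.Basis {α : Fin r →₀ ℕ // α ∉ S} A (MvPolynomial (Fin r) A ⧸ I') :=
      Module.Basis.mk hli hsp with hb
    have hbv : ⇑b = v := Module.Basis.coe_mk _ _
    have hx1' : ↑(b.repr x).support ⊆ T (e.symm p) := by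
      apply b.mem_span_image.1
      rw [hbv, ← himg (e.symm p)]
      beta_reduce at hx1
      exact hx1
    have hx2' : ↑(b.repr x).support ⊆ ⋃ q ∈ {q : Fin (Fintype.card ι) | q ≠ p}, T (e.symm q) := by
      apply b.mem_span_image.1
      rw [hbv]
      refine (iSup₂_le fun q hq => ?_ : _ ≤ Submodule.span A
        (v '' ⋃ q ∈ {q : Fin (Fintype.card ι) | q ≠ p}, T (e.symm q))) hx2
      beta_reduce
      rw [himg (e.symm q)]
      exact Submodule.span_mono (Set.image_mono (Set.subset_biUnion_of_mem (u := fun q => T (e.symm q)) (show q ∈ {q : Fin (Fintype.card ι) | q ≠ p} from hq)))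
    have hsupp : (b.repr x).support = ∅ := by
      by_contra h
      obtain ⟨a, ha⟩ := Finset.nonempty_iff_ne_empty.2 h
      obtain ⟨βp, hβp, hap⟩ := hx1' ha
      obtain ⟨q, hq, haq⟩ := Set.mem_iUnion₂.1 (hx2' ha)
      obtain ⟨βq, hβq, haq2⟩ := haq
      have hpq : e.symm p = e.symm q :=
        hdisj (e.symm p) (e.symm q) βp βq hβp hβq (hap.symm.trans haq2)
      exact hq (e.symm.injective hpq).symm
    have hrepr : b.repr x = 0 := Finsupp.support_eq_empty.1 hsupp
    calc x = b.repr.symm (b.repr x) := (b.repr.symm_apply_apply x).symm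
    _ = 0 := by rw [hrepr]; simp
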